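/- arXiv:2104.10225 — 3 statements merged into one kernel-verified Lean document; each statement's English description precedes it below -/
import Mathlib

section
/- Let $(w_t)_{0\le t\le T}$ be a Brownian motion with augmented natural filtration $(\mathcal{F}_t)$. Let $(\eta_t)_{0\le t\le T}$ be a square-integrable progressively measurable process that is an Itô process, i.e. $\eta_t = \eta_0 + \int_0^t \alpha_s\,ds + \int_0^t \beta_s\,dw_s$ with adapted square-integrable $\alpha,\beta$. Then there exists a square-integrable absolutely continuous (possibly non-adapted) process $(\xi_t)$ such that $\eta_t = \mathbb{E}[\xi_t \mid \mathcal{F}_t]$ for all $t$; one may take $\xi_t = \eta_0 + \int_0^T \beta_s\,dw_s + \int_0^t \alpha_s\,ds$. -/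
open MeasureTheory ProbabilityTheory Filter Set

variable {Ω : Type*}

/-- `w` is a standard Brownian motion with respect to the filtration `F`
on the probability space `(Ω, P)`. -/
structure IsBM {mΩ : MeasurableSpace Ω} (P : Measure Ω) (F : Filtration ℝ mΩ)
    (w : ℝ → Ω → ℝ) : Prop where
  adapted : Adapted F w
  cont : ∀ ω, Continuous fun t => w t ω
  start : ∀ᵐ ω ∂P, w 0 ω = 0
  indep : ∀ s t : ℝ, 0 ≤ s → s ≤ t →
    Indep (MeasurableSpace.comap (fun ω => w t ω - w s ω) inferInstance) (F s) P
  gauss : ∀ s t : ℝ, 0 ≤ s → s ≤ t →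
    Measure.map (fun ω => w t ω - w s ω) P = gaussianReal 0 (Real.toNNReal (t - s))

/-- A process `v` is square integrable on `[0,T] × Ω`, i.e. `𝔼 ∫_0^T v_s² ds < ∞`. -/
def SqInt {mΩ : MeasurableSpace Ω} (P : Measure Ω) (T : ℝ) (v : ℝ → Ω → ℝ) : Prop :=
  Integrable (fun p : ℝ × Ω => (v p.1 p.2)^2) ((volume.restrict (Set.Ioc 0 T)).prod P)

/-- If `η` is a square-integrable progressively measurable Itô process,
`η_t = η_0 + ∫_0^t α_s ds + ∫_0^t β_s dw_s` (where `B t = ∫_0^t β_s dw_s` is the Itô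
integral of `β`: an `L²` martingale vanishing at `0`), then there exists a
square-integrable absolutely continuous (possibly non-adapted) process `ξ` with
`η_t = 𝔼[ξ_t | F_t]` for all `t ∈ [0,T]`; one may take
`ξ_t = η_0 + ∫_0^T β_s dw_s + ∫_0^t α_s ds`. -/
theorem ito_process_is_projection_of_absolutely_continuous
    {mΩ : MeasurableSpace Ω} (P : Measure Ω) [IsProbabilityMeasure P]
    (F : Filtration ℝ mΩ) (w : ℝ → Ω → ℝ) (T : ℝ) (hT : 0 < T)
    (hw : IsBM P F w)
    (η α β B : ℝ → Ω → ℝ)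
    (hηprog : ProgMeasurable F η) (hη2 : ∀ t, MemLp (η t) 2 P)
    (hαprog : ProgMeasurable F α) (hα2 : SqInt P T α)
    (hβprog : ProgMeasurable F β) (hβ2 : SqInt P T β)
    -- `B t = ∫_0^t β_s dw_s`: an `L²` martingale vanishing at `0`
    (hBmart : Martingale B F P) (hB0 : B 0 =ᵐ[P] fun _ => 0)
    (hB2 : ∀ t, MemLp (B t) 2 P)
    (hη : ∀ t ∈ Set.Icc (0:ℝ) T,
      η t =ᵐ[P] fun ω => η 0 ω + (∫ s in (0:ℝ)..t, α s ω) + B t ω) :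
    ∃ ξ : ℝ → Ω → ℝ,
      (∀ t ω, ξ t ω = η 0 ω + B T ω + ∫ s in (0:ℝ)..t, α s ω)
      ∧ MemLp (ξ 0) 2 P
      ∧ ∀ t ∈ Set.Icc (0:ℝ) T, η t =ᵐ[P] P[ξ t|F t] := by
  refine ⟨fun t ω => η 0 ω + B T ω + ∫ s in (0:ℝ)..t, α s ω, fun t ω => rfl, ?_, ?_⟩
  · simp only [intervalIntegral.integral_same, add_zero]
    exact (hη2 0).add (hB2 T)
  · intro t ht
    have hξeq : (fun ω => η 0 ω + B T ω + ∫ s in (0:ℝ)..t, α s ω)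
        =ᵐ[P] fun ω => (η t ω - B t ω) + B T ω := by
      filter_upwards [hη t ht] with ω hω
      rw [hω]; ring
    have h1 : Integrable (fun ω => η t ω - B t ω) P :=
      ((hη2 t).sub (hB2 t)).integrable (by norm_num)
    have h2 : Integrable (B T) P := (hB2 T).integrable (by norm_num)
    have hsm : StronglyMeasurable[F t] (fun ω => η t ω - B t ω) :=
      (IsStronglyProgressive.stronglyAdapted hηprog t).sub (hBmart.stronglyAdapted t)
    have hcond : P[(fun ω => η 0 ω + B T ω + ∫ s in (0:ℝ)..t, α s ω)|F t]
        =ᵐ[P] fun ω => (η t ω - B t ω) + B t ω := by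
      refine (condExp_congr_ae hξeq).trans ?_
      refine (condExp_add h1 h2 _).trans ?_
      rw [condExp_of_stronglyMeasurable (F.le t) hsm h1]
      filter_upwards [hBmart.condExp_ae_eq ht.2] with ω hω2
      simp [hω2]
    filter_upwards [hcond] with ω hω
    rw [hω]; ring
end

section
/- Let $(w_t)_{0\le t\le T}$ be a Brownian motion with augmented natural filtration $(\mathcal{F}_t)$, and let $(\xi_t)_{0\le t\le T}$ be a square-integrable absolutely continuous process, $\xi_t = \xi_0 + \int_0^t \zeta_s\,ds$ with $\zeta$ measurable and square integrable. Define $M_t = \mathbb{E}[\xi_t\mid\mathcal{F}_t] - \mathbb{E}[\xi_0\mid\mathcal{F}_0] - \int_0^t \mathbb{E}[\zeta_r \mid \mathcal{F}_r]\,dr$. Then $(M_t)_{0\le t\le T}$ is an $(\mathcal{F}_t)$-martingale. -/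
open MeasureTheory ProbabilityTheory Filter Set

variable {Ω : Type*}


lemma memℒp_two_integrable_mul {mΩ : MeasurableSpace Ω} {P : Measure Ω}
    {f g : Ω → ℝ} (hf : MemLp f 2 P) (hg : MemLp g 2 P) :
    Integrable (fun ω => f ω * g ω) P := by
  have hf2 : Integrable (fun ω => f ω ^ 2) P :=
    (memLp_two_iff_integrable_sq hf.aestronglyMeasurable).1 hf
  have hg2 : Integrable (fun ω => g ω ^ 2) P :=
    (memLp_two_iff_integrable_sq hg.aestronglyMeasurable).1 hg
  have hbd : Integrable (fun ω => (f ω ^ 2 + g ω ^ 2) / 2) P := (hf2.add hg2).div_const 2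
  refine Integrable.mono' hbd
    (hf.aestronglyMeasurable.mul hg.aestronglyMeasurable) ?_
  refine Eventually.of_forall fun ω => ?_
  rw [Real.norm_eq_abs, abs_mul]
  nlinarith [abs_nonneg (f ω), abs_nonneg (g ω), sq_abs (f ω), sq_abs (g ω),
    sq_nonneg (|f ω| - |g ω|)]

lemma condexp_memℒp_two {m mΩ : MeasurableSpace Ω} {P : Measure Ω} [IsFiniteMeasure P]
    (hm : m ≤ mΩ) {f : Ω → ℝ} (hf : MemLp f 2 P) :
    MemLp (P[f|m]) 2 P := by
  set fL : Lp ℝ 2 P := hf.toLp f with hfL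
  have hcoe : ((condExpL2 ℝ ℝ hm fL : Lp ℝ 2 P) : Ω → ℝ) =ᵐ[P] P[f|m] := by
    refine ae_eq_condExp_of_forall_setIntegral_eq hm (hf.integrable one_le_two) ?_ ?_ ?_
    · intro A hA hAfin
      exact integrableOn_condExpL2_of_measure_ne_top hm hAfin.ne _
    · intro A hA hAfin
      rw [integral_condExpL2_eq hm fL hA hAfin.ne]
      exact setIntegral_congr_ae (hm A hA)
        ((hf.coeFn_toLp).mono (fun ω hω _ => hω))
    · exact aestronglyMeasurable_condExpL2 hm fL
  exact (Lp.memLp _).ae_eq hcoe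

lemma integral_mul_condexp_eq {m mΩ : MeasurableSpace Ω} {P : Measure Ω} [IsFiniteMeasure P]
    (hm : m ≤ mΩ) {h N : Ω → ℝ}
    (hh : AEStronglyMeasurable[m] h P) (hh2 : MemLp h 2 P) (hN2 : MemLp N 2 P) :
    ∫ ω, h ω * (P[N|m]) ω ∂P = ∫ ω, h ω * N ω ∂P := by
  have hN1 : Integrable N P := hN2.integrable one_le_two
  set h' := hh.mk h with hh'
  have hsm : StronglyMeasurable[m] h' := hh.stronglyMeasurable_mk
  have hae : h =ᵐ[P] h' := hh.ae_eq_mk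
  have hh2' : MemLp h' 2 P := hh2.ae_eq hae
  have hint1 : Integrable (h' * N) P := memℒp_two_integrable_mul hh2' hN2
  have hpull : P[h' * N|m] =ᵐ[P] h' * P[N|m] :=
    condExp_mul_of_stronglyMeasurable_left hsm hint1 hN1
  calc ∫ ω, h ω * (P[N|m]) ω ∂P
      = ∫ ω, h' ω * (P[N|m]) ω ∂P :=
        integral_congr_ae (hae.mul EventuallyEq.rfl)
    _ = ∫ ω, (P[h' * N|m]) ω ∂P := (integral_congr_ae hpull).symm
    _ = ∫ ω, (h' * N) ω ∂P := integral_condExp hm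
    _ = ∫ ω, h ω * N ω ∂P := integral_congr_ae (hae.symm.mul EventuallyEq.rfl)
lemma integral_sq_condexp_le {m mΩ : MeasurableSpace Ω} {P : Measure Ω} [IsFiniteMeasure P]
    (hm : m ≤ mΩ) {f : Ω → ℝ} (hf : MemLp f 2 P) :
    ∫ ω, ((P[f|m]) ω) ^ 2 ∂P ≤ ∫ ω, (f ω) ^ 2 ∂P := by
  set g : Ω → ℝ := P[f|m] with hg
  have hg2 : MemLp g 2 P := condexp_memℒp_two hm hf
  have hgg : Integrable (fun ω => g ω * g ω) P := memℒp_two_integrable_mul hg2 hg2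
  have hgf : Integrable (fun ω => g ω * f ω) P := memℒp_two_integrable_mul hg2 hf
  have hff : Integrable (fun ω => f ω * f ω) P := memℒp_two_integrable_mul hf hf
  have key : ∫ ω, g ω * g ω ∂P = ∫ ω, g ω * f ω ∂P :=
    integral_mul_condexp_eq hm stronglyMeasurable_condExp.aestronglyMeasurable hg2 hf
  have hexp : ∫ ω, (g ω - f ω) ^ 2 ∂P
      = ∫ ω, g ω * g ω ∂P - 2 * ∫ ω, g ω * f ω ∂P + ∫ ω, f ω * f ω ∂P := by
    have hA : Integrable (fun ω => g ω * g ω - 2 * (g ω * f ω)) P :=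
      hgg.sub (hgf.const_mul 2)
    have hB : Integrable (fun ω => 2 * (g ω * f ω)) P := hgf.const_mul 2
    have : (fun ω => (g ω - f ω) ^ 2)
        = fun ω => (g ω * g ω - 2 * (g ω * f ω)) + f ω * f ω := by
      funext ω; ring
    rw [this, integral_add hA hff, integral_sub hgg hB, integral_const_mul]
  have hnn : 0 ≤ ∫ ω, (g ω - f ω) ^ 2 ∂P := integral_nonneg fun ω => sq_nonneg _
  have h1 : ∫ ω, g ω * g ω ∂P ≤ ∫ ω, f ω * f ω ∂P := by
    rw [hexp, key] at hnn; linarith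
  simpa [pow_two] using h1

lemma sq_integral_le {μ : Measure ℝ} [IsFiniteMeasure μ] {f : ℝ → ℝ}
    (hf : Integrable f μ) (hf2 : Integrable (fun r => f r ^ 2) μ) :
    (∫ r, f r ∂μ) ^ 2 ≤ (μ univ).toReal * ∫ r, f r ^ 2 ∂μ := by
  by_cases hμ : μ = 0
  · simp [hμ]
  have hmpos : 0 < (μ univ).toReal := by
    rw [ENNReal.toReal_pos_iff]
    exact ⟨by simpa [Measure.measure_univ_eq_zero] using hμ, measure_lt_top _ _⟩
  set m := (μ univ).toReal with hm
  set I : ℝ := ∫ r, f r ∂μ with hI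
  set J : ℝ := ∫ r, f r ^ 2 ∂μ with hJ
  have hnn : 0 ≤ ∫ r, (m * f r - I) ^ 2 ∂μ := integral_nonneg fun r => sq_nonneg _
  have hexp : ∫ r, (m * f r - I) ^ 2 ∂μ = m ^ 2 * J - 2 * m * I * I + m * I ^ 2 := by
    have hA : Integrable (fun r => m ^ 2 * f r ^ 2 - 2 * m * I * f r) μ :=
      (hf2.const_mul (m ^ 2)).sub (hf.const_mul (2 * m * I))
    have hB : Integrable (fun r => 2 * m * I * f r) μ := hf.const_mul (2 * m * I)
    have hC : Integrable (fun r => m ^ 2 * f r ^ 2) μ := hf2.const_mul (m ^ 2)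
    have : (fun r => (m * f r - I) ^ 2)
        = fun r => (m ^ 2 * f r ^ 2 - 2 * m * I * f r) + I ^ 2 := by
      funext r; ring
    rw [this, integral_add hA (integrable_const _), integral_sub hC hB,
      integral_const_mul, integral_const_mul, integral_const]
    simp only [smul_eq_mul, measureReal_def, ← hI, ← hJ, ← hm]
  rw [hexp] at hnn
  nlinarith [hnn, hmpos]


lemma condexp_integral_of_aemeas {m mΩ : MeasurableSpace Ω} {P : Measure Ω}
    [IsProbabilityMeasure P] (hm : m ≤ mΩ)
    (μt : Measure ℝ) [IsFiniteMeasure μt] {g : ℝ → Ω → ℝ}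
    (hgm : Measurable (Function.uncurry g))
    (hg2 : Integrable (fun p : ℝ × Ω => (g p.1 p.2) ^ 2) (μt.prod P))
    (hgad : ∀ᵐ r ∂μt, AEStronglyMeasurable[m] (g r) P ∧ MemLp (g r) 2 P) :
    P[fun ω => ∫ r, g r ω ∂μt | m] =ᵐ[P] fun ω => ∫ r, g r ω ∂μt := by
  set N : Ω → ℝ := fun ω => ∫ r, g r ω ∂μt with hNdef
  have hNsm : StronglyMeasurable N :=
    ((hgm.comp measurable_swap).stronglyMeasurable).integral_prod_right'
  have hg2' : MemLp (Function.uncurry g) 2 (μt.prod P) :=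
    (memLp_two_iff_integrable_sq hgm.aestronglyMeasurable).2 hg2
  have hg1 : Integrable (Function.uncurry g) (μt.prod P) := hg2'.integrable one_le_two
  have hsl : ∀ᵐ ω ∂P, Integrable (fun r => g r ω) μt ∧ Integrable (fun r => (g r ω) ^ 2) μt :=
    (hg1.prod_left_ae).and (hg2.prod_left_ae)
  have hG : Integrable (fun ω => ∫ r, (g r ω) ^ 2 ∂μt) P := hg2.integral_prod_right
  have hN2' : Integrable (fun ω => N ω ^ 2) P := by
    refine Integrable.mono' (hG.const_mul (μt univ).toReal)
      ((hNsm.pow 2).aestronglyMeasurable) ?_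
    filter_upwards [hsl] with ω hω
    rw [Real.norm_eq_abs, abs_of_nonneg (sq_nonneg _)]
    exact sq_integral_le hω.1 hω.2
  have hN2 : MemLp N 2 P := (memLp_two_iff_integrable_sq hNsm.aestronglyMeasurable).2 hN2'
  have hN1 : Integrable N P := hN2.integrable one_le_two
  set Z : Ω → ℝ := P[N|m] with hZdef
  have hZ2 : MemLp Z 2 P := condexp_memℒp_two hm hN2
  have hZ1 : Integrable Z P := integrable_condExp
  have hZsm : StronglyMeasurable Z := stronglyMeasurable_condExp.mono hm
  have hZsm' : AEStronglyMeasurable[m] Z P :=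
    stronglyMeasurable_condExp.aestronglyMeasurable
  -- ∫ Z·Z = ∫ Z·N
  have key1 : ∫ ω, Z ω * Z ω ∂P = ∫ ω, Z ω * N ω ∂P :=
    integral_mul_condexp_eq hm hZsm' hZ2 hN2
  -- Fubini identity
  have keyint : ∀ (h : Ω → ℝ), MemLp h 2 P → StronglyMeasurable h →
      ∫ ω, N ω * h ω ∂P = ∫ r, ∫ ω, g r ω * h ω ∂P ∂μt := by
    intro h hh2 hhsm
    have hh2' : Integrable (fun ω => h ω ^ 2) P :=
      (memLp_two_iff_integrable_sq hh2.aestronglyMeasurable).1 hh2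
    have hintbd : Integrable
        (fun q : Ω × ℝ => ((g q.2 q.1) ^ 2 + (h q.1) ^ 2) / 2) (P.prod μt) := by
      have h1 : Integrable (fun q : Ω × ℝ => (g q.2 q.1) ^ 2) (P.prod μt) := by
        have := hg2.swap
        exact this
      have h2 : Integrable (fun q : Ω × ℝ => (h q.1) ^ 2 * (1 : ℝ)) (P.prod μt) :=
        hh2'.mul_prod (integrable_const 1)
      simp only [mul_one] at h2
      exact (h1.add h2).div_const 2
    have hint : Integrable (Function.uncurry (fun ω r => g r ω * h ω)) (P.prod μt) := by
      refine Integrable.mono' hintbd ?_ ?_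
      · exact ((hgm.comp measurable_swap).mul
          (hhsm.measurable.comp measurable_fst)).aestronglyMeasurable
      · refine Eventually.of_forall fun q => ?_
        simp only [Function.uncurry]
        rw [Real.norm_eq_abs, abs_mul]
        nlinarith [abs_nonneg (g q.2 q.1), abs_nonneg (h q.1), sq_abs (g q.2 q.1),
          sq_abs (h q.1), sq_nonneg (|g q.2 q.1| - |h q.1|)]
    calc ∫ ω, N ω * h ω ∂P = ∫ ω, ∫ r, g r ω * h ω ∂μt ∂P := by
          refine integral_congr_ae (Eventually.of_forall fun ω => ?_)
          simp only [hNdef]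
          exact (integral_mul_const (h ω) (fun r => g r ω)).symm
      _ = ∫ r, ∫ ω, g r ω * h ω ∂P ∂μt := integral_integral_swap hint
  -- ∫ N·N = ∫ N·Z
  have key2 : ∫ ω, N ω * N ω ∂P = ∫ ω, N ω * Z ω ∂P := by
    rw [keyint N hN2 hNsm, keyint Z hZ2 hZsm]
    refine integral_congr_ae ?_
    filter_upwards [hgad] with r hr
    exact (integral_mul_condexp_eq hm hr.1 hr.2 hN2).symm
  have hcomm : ∫ ω, N ω * Z ω ∂P = ∫ ω, Z ω * N ω ∂P := by
    simp_rw [mul_comm]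
  -- conclude ∫ (N - Z)² = 0
  have hNN : Integrable (fun ω => N ω * N ω) P := memℒp_two_integrable_mul hN2 hN2
  have hZN : Integrable (fun ω => Z ω * N ω) P := memℒp_two_integrable_mul hZ2 hN2
  have hZZ : Integrable (fun ω => Z ω * Z ω) P := memℒp_two_integrable_mul hZ2 hZ2
  have hexp : ∫ ω, (N ω - Z ω) ^ 2 ∂P
      = ∫ ω, N ω * N ω ∂P - 2 * ∫ ω, Z ω * N ω ∂P + ∫ ω, Z ω * Z ω ∂P := by
    have hA : Integrable (fun ω => N ω * N ω - 2 * (Z ω * N ω)) P :=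
      hNN.sub (hZN.const_mul 2)
    have hB : Integrable (fun ω => 2 * (Z ω * N ω)) P := hZN.const_mul 2
    have : (fun ω => (N ω - Z ω) ^ 2)
        = fun ω => (N ω * N ω - 2 * (Z ω * N ω)) + Z ω * Z ω := by
      funext ω; ring
    rw [this, integral_add hA hZZ, integral_sub hNN hB, integral_const_mul]
  have hzero : ∫ ω, (N ω - Z ω) ^ 2 ∂P = 0 := by
    rw [hexp, key2, hcomm, ← key1]; ring
  have hsqint : Integrable (fun ω => (N ω - Z ω) ^ 2) P := by
    have : (fun ω => (N ω - Z ω) ^ 2)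
        = fun ω => (N ω * N ω - 2 * (Z ω * N ω)) + Z ω * Z ω := by funext ω; ring
    rw [this]
    exact (hNN.sub (hZN.const_mul 2)).add hZZ
  have hae0 : (fun ω => (N ω - Z ω) ^ 2) =ᵐ[P] 0 :=
    (integral_eq_zero_iff_of_nonneg_ae
      (Eventually.of_forall fun ω => sq_nonneg _) hsqint).1 hzero
  filter_upwards [hae0] with ω hω
  have : (N ω - Z ω) ^ 2 = 0 := hω
  have := pow_eq_zero_iff (n := 2) (by norm_num) |>.1 this
  have : N ω = Z ω := by linarith [sub_eq_zero.1 this]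
  exact this.symm

lemma condexp_integral_congr {m mΩ : MeasurableSpace Ω} {P : Measure Ω}
    [IsProbabilityMeasure P] (hm : m ≤ mΩ)
    (μt : Measure ℝ) [IsFiniteMeasure μt] {g h : ℝ → Ω → ℝ}
    (hg1 : Integrable (Function.uncurry g) (μt.prod P))
    (hh1 : Integrable (Function.uncurry h) (μt.prod P))
    (heq : ∀ᵐ r ∂μt, Integrable (g r) P ∧ Integrable (h r) P ∧ P[g r|m] =ᵐ[P] P[h r|m]) :
    P[fun ω => ∫ r, g r ω ∂μt | m] =ᵐ[P] P[fun ω => ∫ r, h r ω ∂μt | m] := by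
  have hgint : Integrable (fun ω => ∫ r, g r ω ∂μt) P := hg1.integral_prod_right
  have hhint : Integrable (fun ω => ∫ r, h r ω ∂μt) P := hh1.integral_prod_right
  refine (ae_eq_condExp_of_forall_setIntegral_eq hm hgint ?_ ?_
    stronglyMeasurable_condExp.aestronglyMeasurable).symm
  · intro A hA hAfin
    exact integrable_condExp.integrableOn
  · intro A hA hAfin
    have hAm : MeasurableSet A := hm A hA
    have hresg : Integrable (Function.uncurry g) (μt.prod (P.restrict A)) := by
      rw [show μt.prod (P.restrict A) = (μt.prod P).restrict (univ ×ˢ A) by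
        rw [← Measure.prod_restrict univ A, Measure.restrict_univ]]
      exact hg1.restrict
    have hresh : Integrable (Function.uncurry h) (μt.prod (P.restrict A)) := by
      rw [show μt.prod (P.restrict A) = (μt.prod P).restrict (univ ×ˢ A) by
        rw [← Measure.prod_restrict univ A, Measure.restrict_univ]]
      exact hh1.restrict
    calc ∫ ω in A, (P[fun ω => ∫ r, h r ω ∂μt | m]) ω ∂P
        = ∫ ω in A, ∫ r, h r ω ∂μt ∂P := setIntegral_condExp hm hhint hA
      _ = ∫ r, ∫ ω in A, h r ω ∂P ∂μt := (integral_integral_swap hresh).symm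
      _ = ∫ r, ∫ ω in A, g r ω ∂P ∂μt := by
          refine integral_congr_ae ?_
          filter_upwards [heq] with r hr
          calc ∫ ω in A, h r ω ∂P = ∫ ω in A, (P[h r|m]) ω ∂P :=
                (setIntegral_condExp hm hr.2.1 hA).symm
            _ = ∫ ω in A, (P[g r|m]) ω ∂P :=
                integral_congr_ae (ae_restrict_of_ae hr.2.2.symm)
            _ = ∫ ω in A, g r ω ∂P := setIntegral_condExp hm hr.1 hA
      _ = ∫ ω in A, ∫ r, g r ω ∂μt ∂P := integral_integral_swap hresg

/-- For a square-integrable absolutely continuous process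
`ξ_t = ξ_0 + ∫_0^t ζ_s ds`, the process
`M_t = 𝔼[ξ_t|F_t] - 𝔼[ξ_0|F_0] - ∫_0^t 𝔼[ζ_r|F_r] dr` is an `(F_t)`-martingale
(each `M_t` is integrable and `𝔼[M_t|F_s] = M_s` a.s. for `0 ≤ s ≤ t ≤ T`);
here `ζbar` is a jointly measurable version of `r ↦ 𝔼[ζ_r|F_r]`. -/
theorem martingale_part_of_projected_absolutely_continuous_process
    {mΩ : MeasurableSpace Ω} (P : Measure Ω) [IsProbabilityMeasure P]
    (F : Filtration ℝ mΩ) (w : ℝ → Ω → ℝ) (T : ℝ) (hT : 0 < T)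
    (hw : IsBM P F w)
    (ξ ζ : ℝ → Ω → ℝ)
    (hζm : Measurable (Function.uncurry ζ)) (hζ2 : SqInt P T ζ)
    (hξ0 : MemLp (ξ 0) 2 P)
    (hξ : ∀ ω : Ω, ∀ t ∈ Set.Icc (0:ℝ) T, ξ t ω = ξ 0 ω + ∫ s in (0:ℝ)..t, ζ s ω)
    (ζbar : ℝ → Ω → ℝ) (hζbarm : Measurable (Function.uncurry ζbar))
    (hζbar : ∀ r ∈ Set.Icc (0:ℝ) T, ζbar r =ᵐ[P] P[ζ r|F r]) :
    (∀ t ∈ Set.Icc (0:ℝ) T,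
      Integrable (fun ω => (P[ξ t|F t]) ω - (P[ξ 0|F 0]) ω - ∫ r in (0:ℝ)..t, ζbar r ω) P)
    ∧ ∀ s t : ℝ, 0 ≤ s → s ≤ t → t ≤ T →
        P[(fun ω => (P[ξ t|F t]) ω - (P[ξ 0|F 0]) ω - ∫ r in (0:ℝ)..t, ζbar r ω)|F s]
          =ᵐ[P] fun ω => (P[ξ s|F s]) ω - (P[ξ 0|F 0]) ω - ∫ r in (0:ℝ)..s, ζbar r ω := by
  classical
  have hfin : ∀ a b : ℝ, IsFiniteMeasure (volume.restrict (Ioc a b)) := fun a b =>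
    ⟨by rw [Measure.restrict_apply_univ]; exact measure_Ioc_lt_top⟩
  haveI hfinT := hfin 0 T
  have hζ2' : Integrable (fun p : ℝ × Ω => (ζ p.1 p.2) ^ 2)
      ((volume.restrict (Ioc (0:ℝ) T)).prod P) := hζ2
  -- restriction of product-integrability to time subintervals
  have hrsub : ∀ {a b : ℝ}, Ioc a b ⊆ Ioc (0:ℝ) T →
      ∀ {f : ℝ × Ω → ℝ}, Integrable f ((volume.restrict (Ioc (0:ℝ) T)).prod P) →
      Integrable f ((volume.restrict (Ioc a b)).prod P) := by
    intro a b hsub f hf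
    have h1 : volume.restrict (Ioc a b)
        = (volume.restrict (Ioc (0:ℝ) T)).restrict (Ioc a b) :=
      (Measure.restrict_restrict_of_subset hsub).symm
    rw [h1, show ((volume.restrict (Ioc (0:ℝ) T)).restrict (Ioc a b)).prod P
        = ((volume.restrict (Ioc (0:ℝ) T)).prod P).restrict ((Ioc a b) ×ˢ univ) by
      rw [← Measure.prod_restrict, Measure.restrict_univ]]
    exact hf.restrict
  have hζL2 : MemLp (Function.uncurry ζ) 2 ((volume.restrict (Ioc (0:ℝ) T)).prod P) :=
    (memLp_two_iff_integrable_sq hζm.aestronglyMeasurable).2 hζ2'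
  have hζL1 : Integrable (Function.uncurry ζ) ((volume.restrict (Ioc (0:ℝ) T)).prod P) :=
    hζL2.integrable one_le_two
  have hIccae : ∀ᵐ r ∂(volume.restrict (Ioc (0:ℝ) T)), r ∈ Icc (0:ℝ) T := by
    filter_upwards [ae_restrict_mem measurableSet_Ioc] with r hr
    exact Ioc_subset_Icc_self hr
  have haer : ∀ᵐ r ∂(volume.restrict (Ioc (0:ℝ) T)), MemLp (ζ r) 2 P := by
    filter_upwards [hζ2'.prod_right_ae] with r hr
    exact (memLp_two_iff_integrable_sq
      ((hζm.comp measurable_prodMk_left).aestronglyMeasurable)).2 hr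
  -- ζbar is square integrable on the product space
  have hζbar2 : Integrable (fun p : ℝ × Ω => (ζbar p.1 p.2) ^ 2)
      ((volume.restrict (Ioc (0:ℝ) T)).prod P) := by
    have hmeas : AEStronglyMeasurable (fun p : ℝ × Ω => (ζbar p.1 p.2) ^ 2)
        ((volume.restrict (Ioc (0:ℝ) T)).prod P) :=
      (hζbarm.pow_const 2).aestronglyMeasurable
    refine (integrable_prod_iff hmeas).2 ⟨?_, ?_⟩
    · filter_upwards [haer, hIccae] with r hr2 hrIcc
      have h1 : MemLp (P[ζ r|F r]) 2 P := condexp_memℒp_two (F.le r) hr2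
      have h2 : MemLp (ζbar r) 2 P := h1.ae_eq (hζbar r hrIcc).symm
      exact (memLp_two_iff_integrable_sq h2.aestronglyMeasurable).1 h2
    · refine Integrable.mono' hζ2'.integral_norm_prod_left ?_ ?_
      · exact (((hζbarm.pow_const 2).norm).stronglyMeasurable.integral_prod_right').aestronglyMeasurable
      · filter_upwards [haer, hIccae] with r hr2 hrIcc
        have h1 : ∫ ω, ‖(ζbar r ω) ^ 2‖ ∂P = ∫ ω, (ζbar r ω) ^ 2 ∂P := by
          refine integral_congr_ae (Eventually.of_forall fun ω => ?_)
          exact Real.norm_of_nonneg (sq_nonneg _)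
        have h2 : ∫ ω, (ζbar r ω) ^ 2 ∂P = ∫ ω, ((P[ζ r|F r]) ω) ^ 2 ∂P := by
          refine integral_congr_ae ?_
          filter_upwards [hζbar r hrIcc] with ω hω
          rw [hω]
        have h3 : ∫ ω, ((P[ζ r|F r]) ω) ^ 2 ∂P ≤ ∫ ω, (ζ r ω) ^ 2 ∂P :=
          integral_sq_condexp_le (F.le r) hr2
        have h4 : ∫ ω, (ζ r ω) ^ 2 ∂P = ∫ ω, ‖(ζ r ω) ^ 2‖ ∂P := by
          refine integral_congr_ae (Eventually.of_forall fun ω => ?_)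
          exact (Real.norm_of_nonneg (sq_nonneg _)).symm
        have hnn : 0 ≤ ∫ ω, ‖(ζbar r ω) ^ 2‖ ∂P :=
          integral_nonneg fun ω => norm_nonneg _
        rw [Real.norm_eq_abs, abs_of_nonneg hnn, h1, h2]
        rw [h4] at h3
        exact h3
  have hζbarL2 : MemLp (Function.uncurry ζbar) 2 ((volume.restrict (Ioc (0:ℝ) T)).prod P) :=
    (memLp_two_iff_integrable_sq hζbarm.aestronglyMeasurable).2 hζbar2
  have hζbarL1 : Integrable (Function.uncurry ζbar) ((volume.restrict (Ioc (0:ℝ) T)).prod P) :=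
    hζbarL2.integrable one_le_two
  have hCint : ∀ {a b : ℝ}, Ioc a b ⊆ Ioc (0:ℝ) T →
      Integrable (fun ω => ∫ r in Ioc a b, ζbar r ω) P := by
    intro a b hsub
    haveI := hfin a b
    exact (hrsub hsub hζbarL1).integral_prod_right
  have hIζint : ∀ {a b : ℝ}, Ioc a b ⊆ Ioc (0:ℝ) T →
      Integrable (fun ω => ∫ r in Ioc a b, ζ r ω) P := by
    intro a b hsub
    haveI := hfin a b
    exact (hrsub hsub hζL1).integral_prod_right
  have hξint : ∀ u, u ∈ Icc (0:ℝ) T → Integrable (ξ u) P := by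
    intro u hu
    have heq : ξ u = fun ω => ξ 0 ω + ∫ r in Ioc 0 u, ζ r ω := by
      funext ω
      rw [hξ ω u hu, intervalIntegral.integral_of_le hu.1]
    rw [heq]
    exact (hξ0.integrable one_le_two).add (hIζint (Ioc_subset_Ioc le_rfl hu.2))
  constructor
  · intro t ht
    have hrw : (fun ω => (P[ξ t|F t]) ω - (P[ξ 0|F 0]) ω - ∫ r in (0:ℝ)..t, ζbar r ω)
        = fun ω => (P[ξ t|F t]) ω - (P[ξ 0|F 0]) ω - ∫ r in Ioc (0:ℝ) t, ζbar r ω := by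
      funext ω; rw [intervalIntegral.integral_of_le ht.1]
    rw [hrw]
    exact (integrable_condExp.sub integrable_condExp).sub (hCint (Ioc_subset_Ioc le_rfl ht.2))
  · intro s t h0s hst htT
    have h0t : 0 ≤ t := h0s.trans hst
    have hsT : s ≤ T := hst.trans htT
    have hsub0s : Ioc (0:ℝ) s ⊆ Ioc (0:ℝ) T := Ioc_subset_Ioc le_rfl hsT
    have hsubst : Ioc s t ⊆ Ioc (0:ℝ) T := Ioc_subset_Ioc h0s htT
    have hsub0t : Ioc (0:ℝ) t ⊆ Ioc (0:ℝ) T := Ioc_subset_Ioc le_rfl htT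
    have hrwt : (fun ω => (P[ξ t|F t]) ω - (P[ξ 0|F 0]) ω - ∫ r in (0:ℝ)..t, ζbar r ω)
        = fun ω => (P[ξ t|F t]) ω - (P[ξ 0|F 0]) ω - ∫ r in Ioc (0:ℝ) t, ζbar r ω := by
      funext ω; rw [intervalIntegral.integral_of_le h0t]
    have hrws : (fun ω => (P[ξ s|F s]) ω - (P[ξ 0|F 0]) ω - ∫ r in (0:ℝ)..s, ζbar r ω)
        = fun ω => (P[ξ s|F s]) ω - (P[ξ 0|F 0]) ω - ∫ r in Ioc (0:ℝ) s, ζbar r ω := by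
      funext ω; rw [intervalIntegral.integral_of_le h0s]
    rw [hrwt, hrws]
    set At : Ω → ℝ := P[ξ t|F t] with hAt
    set As : Ω → ℝ := P[ξ s|F s] with hAs
    set B : Ω → ℝ := P[ξ 0|F 0] with hB
    set Ct : Ω → ℝ := fun ω => ∫ r in Ioc (0:ℝ) t, ζbar r ω with hCt
    set Cs : Ω → ℝ := fun ω => ∫ r in Ioc (0:ℝ) s, ζbar r ω with hCs
    set Dst : Ω → ℝ := fun ω => ∫ r in Ioc s t, ζbar r ω with hDst
    set Ist : Ω → ℝ := fun ω => ∫ r in Ioc s t, ζ r ω with hIst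
    have hCtInt : Integrable Ct P := hCint hsub0t
    have hCsInt : Integrable Cs P := hCint hsub0s
    have hDstInt : Integrable Dst P := hCint hsubst
    have hIstInt : Integrable Ist P := hIζint hsubst
    have hABInt : Integrable (fun ω => At ω - B ω) P :=
      integrable_condExp.sub integrable_condExp
    -- pointwise splitting of ξ t
    have hsplit : ξ t =ᵐ[P] fun ω => ξ s ω + Ist ω := by
      filter_upwards [hζL1.prod_left_ae] with ω hω
      have hint : IntegrableOn (fun r => ζ r ω) (Ioc (0:ℝ) T) volume := hω
      have h1 : ∫ r in Ioc (0:ℝ) t, ζ r ω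
          = (∫ r in Ioc (0:ℝ) s, ζ r ω) + ∫ r in Ioc s t, ζ r ω := by
        rw [← Ioc_union_Ioc_eq_Ioc h0s hst,
          setIntegral_union (Ioc_disjoint_Ioc_of_le le_rfl) measurableSet_Ioc
            (hint.mono_set hsub0s) (hint.mono_set hsubst)]
      rw [hξ ω t ⟨h0t, htT⟩, hξ ω s ⟨h0s, hsT⟩, intervalIntegral.integral_of_le h0t,
        intervalIntegral.integral_of_le h0s, h1]
      ring
    have hCadd : Ct =ᵐ[P] fun ω => Cs ω + Dst ω := by
      filter_upwards [hζbarL1.prod_left_ae] with ω hω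
      have hint : IntegrableOn (fun r => ζbar r ω) (Ioc (0:ℝ) T) volume := hω
      simp only [hCt, hCs, hDst]
      rw [← Ioc_union_Ioc_eq_Ioc h0s hst,
        setIntegral_union (Ioc_disjoint_Ioc_of_le le_rfl) measurableSet_Ioc
          (hint.mono_set hsub0s) (hint.mono_set hsubst)]
    -- the conditional expectation computations
    have E1 : P[(fun ω => At ω - B ω - Ct ω)|F s]
        =ᵐ[P] fun ω => (P[(fun ω => At ω - B ω)|F s]) ω - (P[Ct|F s]) ω :=
      condExp_sub hABInt hCtInt (F s)
    have E2 : P[(fun ω => At ω - B ω)|F s]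
        =ᵐ[P] fun ω => (P[At|F s]) ω - (P[B|F s]) ω :=
      condExp_sub integrable_condExp integrable_condExp (F s)
    have E3 : P[At|F s] =ᵐ[P] P[ξ t|F s] :=
      condExp_condExp_of_le (F.mono hst) (F.le t)
    have E4 : P[ξ t|F s] =ᵐ[P] fun ω => (P[ξ s|F s]) ω + (P[Ist|F s]) ω :=
      (condExp_congr_ae hsplit).trans (condExp_add (hξint s ⟨h0s, hsT⟩) hIstInt (F s))
    have E5 : P[Ist|F s] =ᵐ[P] P[Dst|F s] := by
      haveI := hfin s t
      refine condexp_integral_congr (F.le s) (volume.restrict (Ioc s t))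
        (hrsub hsubst hζL1) (hrsub hsubst hζbarL1) ?_
      have h1 : ∀ᵐ r ∂(volume.restrict (Ioc s t)), MemLp (ζ r) 2 P :=
        ae_restrict_of_ae_restrict_of_subset hsubst haer
      filter_upwards [h1, ae_restrict_mem measurableSet_Ioc] with r hr hrmem
      have hrIcc : r ∈ Icc (0:ℝ) T := ⟨h0s.trans hrmem.1.le, hrmem.2.trans htT⟩
      have hbar : ζbar r =ᵐ[P] P[ζ r|F r] := hζbar r hrIcc
      have hbarint : Integrable (ζbar r) P := integrable_condExp.congr hbar.symm
      refine ⟨hr.integrable one_le_two, hbarint, ?_⟩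
      exact ((condExp_congr_ae hbar).trans
        (condExp_condExp_of_le (F.mono hrmem.1.le) (F.le r))).symm
    have E6 : P[B|F s] =ᵐ[P] B := by
      rw [hB, condExp_of_stronglyMeasurable (F.le s)
        (stronglyMeasurable_condExp.mono (F.mono h0s)) integrable_condExp]
    have E7 : P[Ct|F s] =ᵐ[P] fun ω => (P[Cs|F s]) ω + (P[Dst|F s]) ω :=
      (condExp_congr_ae hCadd).trans (condExp_add hCsInt hDstInt (F s))
    have E8 : P[Cs|F s] =ᵐ[P] Cs := by
      haveI := hfin 0 s
      refine condexp_integral_of_aemeas (F.le s) (volume.restrict (Ioc (0:ℝ) s))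
        hζbarm (hrsub hsub0s hζbar2) ?_
      have h2 : ∀ᵐ r ∂(volume.restrict (Ioc (0:ℝ) s)), MemLp (ζ r) 2 P :=
        ae_restrict_of_ae_restrict_of_subset hsub0s haer
      filter_upwards [h2, ae_restrict_mem measurableSet_Ioc] with r hr hrmem
      have hrIcc : r ∈ Icc (0:ℝ) T := ⟨hrmem.1.le, hrmem.2.trans hsT⟩
      have hbar : ζbar r =ᵐ[P] P[ζ r|F r] := hζbar r hrIcc
      constructor
      · exact ⟨P[ζ r|F r], stronglyMeasurable_condExp.mono (F.mono hrmem.2), hbar⟩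
      · exact (condexp_memℒp_two (F.le r) hr).ae_eq hbar.symm
    filter_upwards [E1, E2, E3, E4, E5, E6, E7, E8] with ω h1 h2 h3 h4 h5 h6 h7 h8
    have hAs' : (P[ξ s|F s]) ω = As ω := rfl
    rw [h1, h2, h3, h4, h7, h6, h8, h5, hAs']
    ring
end

section
/- Let $h:C[0,t]\to\mathbb{R}$ belong to class $\mathcal{A}_t$ and admit a continuous extension to the space $D[0,t]$ of càdlàg paths with the Skorokhod topology. Then for every $c \in C[0,t]$, the Dupire vertical derivative $\lim_{\epsilon\to 0} \frac{h(c + \epsilon e_t) - h(c)}{\epsilon}$, where $e_t(s) = \mathbf{1}_{\{s=t\}}$, exists and equals $\partial_{c_t}h(c)$. -/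
open MeasureTheory Filter Set

/-- The sup norm `‖z‖ = sup_{s ∈ [0,T]} |z s|` of a path, as used on `C[0,T]`. -/
noncomputable def supNorm (T : ℝ) (z : ℝ → ℝ) : ℝ :=
  ⨆ s : Set.Icc (0:ℝ) T, |z s|

/-- A functional `h` on paths belongs to the class `𝒜_t` at `c`, with vertical part `dh`
(an atom at `t`) and absolutely continuous part `δh`, if its (Fréchet) derivative at `c`
has the form
`h(c+z) = h(c) + dh ⬝ z_t + ∫_0^t δh(s) z_s ds + o(‖z‖)` as `‖z‖ → 0`. -/
def MemClassA (T t : ℝ) (h : (ℝ → ℝ) → ℝ) (c : ℝ → ℝ) (dh : ℝ) (δh : ℝ → ℝ) : Prop :=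
  IntegrableOn δh (Set.Icc 0 t) volume ∧
  ∀ ε > (0:ℝ), ∃ δ > (0:ℝ), ∀ z : ℝ → ℝ, Continuous z →
    (∀ s ∈ Set.Icc (0:ℝ) T, |z s| ≤ δ) →
    |h (fun s => c s + z s) - h c - (dh * z t + ∫ s in (0:ℝ)..t, δh s * z s)|
      ≤ ε * supNorm T z

def ramp (t : ℝ) (n : ℕ) (s : ℝ) : ℝ := max 0 (min 1 ((s - t) * ((n : ℝ) + 1) + 1))

lemma ramp_cont (t : ℝ) (n : ℕ) : Continuous (ramp t n) := by
  unfold ramp; fun_prop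

lemma ramp_nonneg (t : ℝ) (n : ℕ) (s : ℝ) : 0 ≤ ramp t n s := le_max_left _ _

lemma ramp_le_one (t : ℝ) (n : ℕ) (s : ℝ) : ramp t n s ≤ 1 :=
  max_le zero_le_one (min_le_left _ _)

lemma ramp_zero (t : ℝ) (n : ℕ) (s : ℝ) (hs : s ≤ t - 1 / ((n : ℝ) + 1)) :
    ramp t n s = 0 := by
  have hn : (0:ℝ) < (n : ℝ) + 1 := by positivity
  have h1 : s - t ≤ -(1 / ((n : ℝ) + 1)) := by linarith
  have h2 : (s - t) * ((n : ℝ) + 1) + 1 ≤ 0 := by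
    have := mul_le_mul_of_nonneg_right h1 hn.le
    rw [neg_mul, one_div, inv_mul_cancel₀ hn.ne'] at this
    linarith
  exact max_eq_left ((min_le_right _ _).trans h2)

lemma ramp_at (t : ℝ) (n : ℕ) : ramp t n t = 1 := by
  simp [ramp]

lemma supNorm_le {T : ℝ} (hT : 0 ≤ T) {z : ℝ → ℝ} {a : ℝ} (hz : ∀ s, |z s| ≤ a) :
    supNorm T z ≤ a := by
  haveI : Nonempty (Set.Icc (0:ℝ) T) := ⟨⟨0, le_refl 0, hT⟩⟩
  exact ciSup_le fun s => hz s


/-- Let `h` be a path functional of class `𝒜_t` (at every continuous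
path, with vertical part `dh c` and absolutely continuous part `δh c`) admitting a
continuous extension `H` to the space `D[0,t]` of càdlàg paths with the Skorokhod
topology.  (The Skorokhod continuity of `H` is encoded through its sequential
continuity along continuous monotone approximations of the vertical bump `c + ε e_t`,
`e_t = 1_{{t}}`, which is how it is used.)  Then for every continuous `c` the Dupire
vertical derivative `lim_{ε→0} (h(c + ε e_t) - h(c))/ε` exists and equals
`∂_{c_t} h(c) = dh c`. -/
theorem vertical_derivative_of_classA
    (t : ℝ) (ht : 0 < t) (h H : (ℝ → ℝ) → ℝ)
    (hext : ∀ c : ℝ → ℝ, ContinuousOn c (Set.Icc 0 t) → H c = h c)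
    (hHcont : ∀ c : ℝ → ℝ, ContinuousOn c (Set.Icc 0 t) → ∀ ε : ℝ, ∀ z : ℕ → ℝ → ℝ,
      (∀ n, Continuous (z n)) → (∀ (n : ℕ) (s : ℝ), 0 ≤ z n s ∧ z n s ≤ 1) →
      (∀ (n : ℕ) (s : ℝ), s ≤ t - 1 / ((n : ℝ) + 1) → z n s = 0) → (∀ n, z n t = 1) →
      Filter.Tendsto (fun n => H fun s => c s + ε * z n s) Filter.atTop
        (nhds (H fun s => c s + ε * if s = t then 1 else 0)))
    (dh : (ℝ → ℝ) → ℝ) (δh : (ℝ → ℝ) → ℝ → ℝ)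
    (hA : ∀ c : ℝ → ℝ, Continuous c → MemClassA t t h c (dh c) (δh c)) :
    ∀ c : ℝ → ℝ, Continuous c →
      Filter.Tendsto
        (fun ε : ℝ => ((H fun s => c s + ε * if s = t then 1 else 0) - h c) / ε)
        (nhdsWithin 0 {(0:ℝ)}ᶜ) (nhds (dh c)) := by
  intro c hc
  rw [Metric.tendsto_nhdsWithin_nhds]
  intro ε' hε'
  obtain ⟨hδint, hF⟩ := hA c hc
  obtain ⟨δ, hδ, hδprop⟩ := hF (ε'/2) (by linarith)
  refine ⟨δ, hδ, ?_⟩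
  intro x hx hxd
  have hx0 : x ≠ 0 := by simpa [Set.mem_compl_iff] using hx
  rw [Real.dist_eq, sub_zero] at hxd
  -- Key claim
  have key : |(H fun s => c s + x * if s = t then 1 else 0) - h c - dh c * x|
      ≤ ε'/2 * |x| := by
    -- limit of H along the ramps
    have hHlim := hHcont c hc.continuousOn x (ramp t) (ramp_cont t)
      (fun n s => ⟨ramp_nonneg t n s, ramp_le_one t n s⟩)
      (fun n s hs => ramp_zero t n s hs) (fun n => ramp_at t n)
    have hHh : ∀ n, H (fun s => c s + x * ramp t n s) = h (fun s => c s + x * ramp t n s) :=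
      fun n => hext _ ((hc.add (continuous_const.mul (ramp_cont t n))).continuousOn)
    -- integral term tends to 0
    have hIlim : Tendsto (fun n => ∫ s in (0:ℝ)..t, δh c s * (x * ramp t n s)) atTop
        (nhds 0) := by
      simp_rw [intervalIntegral.integral_of_le ht.le]
      have hmeasδ : AEStronglyMeasurable (δh c) (volume.restrict (Set.Ioc 0 t)) :=
        hδint.aestronglyMeasurable.mono_measure
          (Measure.restrict_mono Set.Ioc_subset_Icc_self le_rfl)
      have hne : ∀ᵐ s ∂(volume.restrict (Set.Ioc (0:ℝ) t)), s ≠ t := by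
        refine ae_restrict_of_ae ?_
        rw [ae_iff]
        have : {a : ℝ | ¬ a ≠ t} = {t} := by ext a; simp
        rw [this]
        exact Real.volume_singleton
      have hconv := MeasureTheory.tendsto_integral_of_dominated_convergence
        (μ := volume.restrict (Set.Ioc (0:ℝ) t))
        (F := fun n s => δh c s * (x * ramp t n s)) (f := fun _ => (0:ℝ))
        (fun s => |δh c s| * |x|)
        (fun n => hmeasδ.mul ((continuous_const.mul (ramp_cont t n)).aestronglyMeasurable))
        (((hδint.mono_set Set.Ioc_subset_Icc_self).abs).mul_const |x|)
        (fun n => Filter.Eventually.of_forall fun s => by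
          rw [Real.norm_eq_abs, abs_mul, abs_mul]
          have h1 : |ramp t n s| ≤ 1 := by
            rw [abs_of_nonneg (ramp_nonneg t n s)]; exact ramp_le_one t n s
          have := mul_le_of_le_one_right (abs_nonneg x) h1
          exact mul_le_mul_of_nonneg_left this (abs_nonneg _))
        ?_
      · simpa using hconv
      · refine ((ae_restrict_mem measurableSet_Ioc).and hne).mono ?_
        rintro s ⟨hs, hst⟩
        have hslt : s < t := lt_of_le_of_ne hs.2 hst
        have hev : ∀ᶠ n : ℕ in atTop, (1:ℝ)/((n:ℝ)+1) ≤ t - s :=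
          tendsto_one_div_add_atTop_nhds_zero_nat.eventually
            (eventually_le_nhds (by linarith))
        refine Tendsto.congr' ?_ tendsto_const_nhds
        filter_upwards [hev] with n hn
        rw [ramp_zero t n s (by linarith)]
        ring
    -- per-n bound
    have hbnd : ∀ n, |h (fun s => c s + x * ramp t n s) - h c -
        (dh c * x + ∫ s in (0:ℝ)..t, δh c s * (x * ramp t n s))| ≤ ε'/2 * |x| := by
      intro n
      have hb := hδprop (fun s => x * ramp t n s)
        (continuous_const.mul (ramp_cont t n))
        (fun s _ => by
          rw [abs_mul]
          have h1 : |ramp t n s| ≤ 1 := by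
            rw [abs_of_nonneg (ramp_nonneg t n s)]; exact ramp_le_one t n s
          calc |x| * |ramp t n s| ≤ |x| * 1 :=
                mul_le_mul_of_nonneg_left h1 (abs_nonneg x)
            _ = |x| := mul_one _
            _ ≤ δ := hxd.le)
      simp only [ramp_at, mul_one] at hb
      refine hb.trans ?_
      have hsup : supNorm t (fun s => x * ramp t n s) ≤ |x| := by
        refine supNorm_le ht.le fun s => ?_
        rw [abs_mul]
        have h1 : |ramp t n s| ≤ 1 := by
          rw [abs_of_nonneg (ramp_nonneg t n s)]; exact ramp_le_one t n s
        exact mul_le_of_le_one_right (abs_nonneg x) h1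
      exact mul_le_mul_of_nonneg_left hsup (by linarith)
    -- pass to the limit
    have hlim2 : Tendsto (fun n => h (fun s => c s + x * ramp t n s) - h c -
        (dh c * x + ∫ s in (0:ℝ)..t, δh c s * (x * ramp t n s))) atTop
        (nhds ((H fun s => c s + x * if s = t then 1 else 0) - h c - (dh c * x + 0))) := by
      exact ((hHlim.congr hHh).sub tendsto_const_nhds).sub (hIlim.const_add _)
    rw [add_zero] at hlim2
    exact le_of_tendsto hlim2.abs (Filter.Eventually.of_forall hbnd)
  have hxpos : 0 < |x| := abs_pos.2 hx0
  rw [Real.dist_eq]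
  have heq : ((H fun s => c s + x * if s = t then 1 else 0) - h c) / x - dh c =
      ((H fun s => c s + x * if s = t then 1 else 0) - h c - dh c * x) / x := by
    field_simp
  rw [heq, abs_div, div_lt_iff₀ hxpos]
  calc |(H fun s => c s + x * if s = t then 1 else 0) - h c - dh c * x|
      ≤ ε'/2 * |x| := key
    _ < ε' * |x| := by nlinarith
end
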